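/- Let C be a bounded linear operator on ℓ²(ℕ) that is tridiagonal with real matrix entries, symmetric (C_{j+1,j} = C_{j,j+1}), and satisfies C_{j,j} > 0 and C_{j,j+1} > 0 for all j ∈ ℕ; let ν be a real number with ν > sup_{j∈ℕ} C_{j,j}. If there exists a sequence (g_j)_{j∈ℕ} with g_j ∈ [0,1] for all j and C_{j,j+1}² / ((ν − C_{j,j})(ν − C_{j+1,j+1})) ≤ g_{j+1}(1 − g_j) for all j ∈ ℕ, then r₀(C) ≤ ν. -/

import Mathlib

noncomputable section
open Filter Complex Topology
open scoped ENNReal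

/-- The Hilbert space ℓ²(ℤ). -/
abbrev HZ := lp (fun _ : ℤ => ℂ) 2

/-- The standard orthonormal basis of ℓ²(ℤ). -/
def eZ (i : ℤ) : HZ := lp.single 2 i 1

/-- Matrix entry `A_{i,j} = ⟨A e_j, e_i⟩` (inner product linear in the first slot,
here written in Mathlib's convention which is conjugate-linear in the first slot). -/
def entry (A : HZ →L[ℂ] HZ) (i j : ℤ) : ℂ := inner ℂ (eZ i) (A (eZ j))

/-- The (closed) numerical range `N(A) = clos {⟨Ax,x⟩ : ‖x‖ = 1}`. -/
def numRange (A : HZ →L[ℂ] HZ) : Set ℂ :=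
  closure {z | ∃ x : HZ, ‖x‖ = 1 ∧ (inner ℂ x (A x) : ℂ) = z}

/-- The numerical abscissa `r₀(A) = max {Re z : z ∈ N(A)}`. -/
def r0 (A : HZ →L[ℂ] HZ) : ℝ := sSup (Complex.re '' numRange A)

/-- The rotated numerical abscissa `r_φ(A) = max {Re z : z ∈ N(e^{iφ}A)}`. -/
def rphi (φ : ℝ) (A : HZ →L[ℂ] HZ) : ℝ := r0 (Complex.exp (φ * Complex.I) • A)

lemma memShift (k : ℤ) (x : HZ) : Memℓp (fun j => x (j - k)) 2 := by
  have h := lp.memℓp x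
  rw [memℓp_gen_iff (by norm_num)] at h ⊢
  simpa [Function.comp_def] using ((Equiv.subRight k).summable_iff (f := fun i => ‖x i‖ ^ (2:ℝ≥0∞).toReal)).mpr h

def shiftLM (k : ℤ) : HZ →ₗ[ℂ] HZ where
  toFun x := ⟨fun j => x (j - k), memShift k x⟩
  map_add' x y := by ext j; simp [lp.coeFn_add]; rfl
  map_smul' c x := by ext j; simp [lp.coeFn_smul]

lemma shift_norm (k : ℤ) (x : HZ) : ‖shiftLM k x‖ = ‖x‖ := by
  rw [lp.norm_eq_tsum_rpow (by norm_num) x, lp.norm_eq_tsum_rpow (by norm_num) (shiftLM k x)]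
  congr 1
  exact (Equiv.subRight k).tsum_eq (f := fun i => ‖x i‖ ^ (2:ℝ≥0∞).toReal)

/-- The shift operator `V_k` on ℓ²(ℤ), `(V_k x)_j = x_{j-k}`. -/
def Vshift (k : ℤ) : HZ →L[ℂ] HZ :=
  LinearIsometry.toContinuousLinearMap ⟨shiftLM k, shift_norm k⟩

/-- `B` is a limit operator of `A`: there is a sequence of integers `h` with `|h m| → ∞`
such that `V_{-h_m} A V_{h_m} → B` strongly. -/
def IsLimOp (A B : HZ →L[ℂ] HZ) : Prop :=
  ∃ h : ℕ → ℤ, Tendsto (fun m => |h m|) atTop atTop ∧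
    ∀ x : HZ, Tendsto (fun m => Vshift (-(h m)) (A (Vshift (h m) x))) atTop (𝓝 (B x))

/-- The operator spectrum: the set of all limit operators of `A`. -/
def opSpec (A : HZ →L[ℂ] HZ) : Set (HZ →L[ℂ] HZ) := {B | IsLimOp A B}

/-- A band operator: only finitely many diagonals are nonzero. -/
def IsBandOp (A : HZ →L[ℂ] HZ) : Prop :=
  ∃ N : ℕ, ∀ i j : ℤ, (N : ℤ) < |i - j| → entry A i j = 0

/-- `M(U_n, …, U_m)`: the k-th diagonal has entries in `U k` for `n ≤ k ≤ m`,
and all other diagonals vanish. -/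
def Mset (n m : ℤ) (U : ℤ → Set ℂ) : Set (HZ →L[ℂ] HZ) :=
  {A | ∀ i k : ℤ, (n ≤ k → k ≤ m → entry A (i + k) i ∈ U k) ∧
      (¬(n ≤ k ∧ k ≤ m) → entry A (i + k) i = 0)}

/-- The orthogonal projection `P_{k,l}` onto `span{e_k, …, e_l}`. -/
def projIcc (k l : ℤ) : HZ →L[ℂ] HZ :=
  ∑ i ∈ Finset.Icc k l, (innerSL ℂ (eZ i)).smulRight (eZ i)

/-- The finite matrix `b` placed in `ℓ²(ℤ)` with rows/columns at positions `k, …, k+s`. -/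
def embedMat (k : ℤ) (s : ℕ) (b : Fin (s+1) → Fin (s+1) → ℂ) : HZ →L[ℂ] HZ :=
  ∑ p : Fin (s+1), ∑ q : Fin (s+1),
    b p q • (innerSL ℂ (eZ (k + (q : ℤ)))).smulRight (eZ (k + (p : ℤ)))

/-- A finite square matrix whose k-th diagonal entries lie in `U k` for `n ≤ k ≤ m`
and whose remaining entries vanish. -/
def finPattern (n m : ℤ) (U : ℤ → Set ℂ) (s : ℕ) (b : Fin (s+1) → Fin (s+1) → ℂ) : Prop :=
  ∀ p q : Fin (s+1), (n ≤ (p : ℤ) - (q : ℤ) → (p : ℤ) - (q : ℤ) ≤ m →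
      b p q ∈ U ((p : ℤ) - (q : ℤ))) ∧
    (¬(n ≤ (p : ℤ) - (q : ℤ) ∧ (p : ℤ) - (q : ℤ) ≤ m) → b p q = 0)

/-- Pseudo-ergodic operators `ΨE(U_n, …, U_m)`. -/
def PsiE (n m : ℤ) (U : ℤ → Set ℂ) : Set (HZ →L[ℂ] HZ) :=
  {A | A ∈ Mset n m U ∧ ∀ ε > (0:ℝ), ∀ (s : ℕ) (b : Fin (s+1) → Fin (s+1) → ℂ),
    finPattern n m U s b → ∃ k : ℤ,
      ‖projIcc k (k + s) ∘L A ∘L projIcc k (k + s) - embedMat k s b‖ ≤ ε}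

/-- The essential spectrum: the set of `λ` such that `A - λI` is not Fredholm. -/
def essSpec (A : HZ →L[ℂ] HZ) : Set ℂ :=
  {lam | ¬(FiniteDimensional ℂ (LinearMap.ker ((A - lam • (1 : HZ →L[ℂ] HZ) : HZ →ₗ[ℂ] HZ))) ∧
      FiniteDimensional ℂ ((LinearMap.range ((A - lam • (1 : HZ →L[ℂ] HZ) : HZ →ₗ[ℂ] HZ)))ᗮ))}

/-- The Hilbert space ℓ²(ℕ). -/
abbrev HN := lp (fun _ : ℕ => ℂ) 2

def eN (i : ℕ) : HN := lp.single 2 i 1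

def entryN (A : HN →L[ℂ] HN) (i j : ℕ) : ℂ := inner ℂ (eN i) (A (eN j))

def numRangeN (A : HN →L[ℂ] HN) : Set ℂ :=
  closure {z | ∃ x : HN, ‖x‖ = 1 ∧ (inner ℂ x (A x) : ℂ) = z}

def r0N (A : HN →L[ℂ] HN) : ℝ := sSup (Complex.re '' numRangeN A)


section SchurAux

lemma eN_apply (i j : ℕ) : (eN i) j = if j = i then 1 else 0 := by
  by_cases h : j = i
  · subst h; simp [eN, lp.single_apply_self]
  · rw [if_neg h]; exact lp.single_apply_ne 2 i _ h

lemma inner_eN (i : ℕ) (y : HN) : (inner ℂ (eN i) y : ℂ) = y i := by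
  rw [lp.inner_eq_tsum, tsum_eq_single i]
  · simp [eN_apply]
  · intro j hj
    simp [RCLike.inner_apply, eN_apply, hj]

lemma smul_eN (i : ℕ) (c : ℂ) : c • eN i = lp.single 2 i c := by
  ext j
  rcases eq_or_ne j i with h | h
  · subst h; simp [eN_apply, lp.single_apply_self]
  · have h2 : (lp.single 2 i c : HN) j = 0 := lp.single_apply_ne 2 i _ h
    simp [eN_apply, h, h2]

lemma hasSum_Cx (x : HN) (C : HN →L[ℂ] HN) (i : ℕ) :
    HasSum (fun j => x j * entryN C i j) ((C x) i) := by
  have h1 : HasSum (fun j : ℕ => lp.single 2 j (x j)) x := lp.hasSum_single ENNReal.ofNat_ne_top x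
  have h2 := ((innerSL ℂ (eN i)).comp C).hasSum h1
  simp only [ContinuousLinearMap.comp_apply, innerSL_apply_apply, ← smul_eN, map_smul,
    inner_smul_right, inner_eN] at h2
  simpa [entryN, inner_eN, smul_eq_mul] using h2

lemma norm_eN (i : ℕ) : ‖eN i‖ = 1 := by
  have := lp.norm_single (p := 2) (E := fun _ : ℕ => ℂ) (by norm_num) i (1 : ℂ)
  simpa [eN] using this

lemma schur_step (b p q c d g h : ℝ) (hb : 0 ≤ b) (hc : 0 ≤ c) (hd : 0 ≤ d)
    (hp : 0 < p) (hq : 0 < q) (hg1 : g ≤ 1) (hh0 : 0 ≤ h)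
    (key : b ^ 2 / (p * q) ≤ h * (1 - g)) :
    2 * (b * (c * d)) ≤ (1 - g) * p * c ^ 2 + h * q * d ^ 2 := by
  have hpq : 0 < p * q := mul_pos hp hq
  have key2 : b ^ 2 ≤ h * (1 - g) * (p * q) := by
    rw [div_le_iff₀ hpq] at key; linarith
  set s := (1 - g) * p * c ^ 2 with hs
  set t := h * q * d ^ 2 with ht
  have hsn : 0 ≤ s := mul_nonneg (mul_nonneg (by linarith) hp.le) (sq_nonneg c)
  have htn : 0 ≤ t := by positivity
  have hz : 0 ≤ b * (c * d) := by positivity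
  have key3 : (b * (c * d)) ^ 2 ≤ s * t := by
    have h4 := mul_le_mul_of_nonneg_right key2 (sq_nonneg (c * d))
    calc (b * (c * d)) ^ 2 = b ^ 2 * (c * d) ^ 2 := by ring
    _ ≤ h * (1 - g) * (p * q) * (c * d) ^ 2 := h4
    _ = s * t := by rw [hs, ht]; ring
  nlinarith [sq_nonneg (s - t), sq_nonneg (s + t - 2 * (b * (c * d)))]

lemma re_cross (z w : ℂ) : ((starRingEnd ℂ) z * w).re ≤ ‖z‖ * ‖w‖ := by
  calc ((starRingEnd ℂ) z * w).re ≤ ‖(starRingEnd ℂ) z * w‖ := Complex.re_le_norm _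
  _ = ‖z‖ * ‖w‖ := by rw [norm_mul, Complex.norm_conj]

lemma re_diag (z : ℂ) : ((starRingEnd ℂ) z * z).re = ‖z‖ ^ 2 := by
  rw [mul_comm, Complex.mul_conj, Complex.ofReal_re, Complex.normSq_eq_norm_sq]

end SchurAux

set_option maxHeartbeats 2000000 in
/-- Szwarc's Schur-test bound. Let `C` be a bounded, real, symmetric,
tridiagonal operator on `ℓ²(ℕ)` with positive diagonal and superdiagonal entries, and
`ν > sup_j C_{j,j}`. If a sequence `(g_j) ⊆ [0,1]` satisfies the Schur-test inequality
`C_{j,j+1}² / ((ν − C_{j,j})(ν − C_{j+1,j+1})) ≤ g_{j+1}(1 − g_j)`, then `r₀(C) ≤ ν`. -/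
theorem r0_le_of_schur_test
    (C : HN →L[ℂ] HN)
    (htri : ∀ i j : ℕ, 1 < ((i : ℤ) - (j : ℤ)).natAbs → entryN C i j = 0)
    (hreal : ∀ i j : ℕ, (entryN C i j).im = 0)
    (hsym : ∀ j : ℕ, entryN C (j + 1) j = entryN C j (j + 1))
    (hdiag : ∀ j : ℕ, 0 < (entryN C j j).re)
    (hoff : ∀ j : ℕ, 0 < (entryN C j (j + 1)).re)
    (ν : ℝ) (hν : (⨆ j : ℕ, (entryN C j j).re) < ν)
    (gs : ℕ → ℝ) (hg : ∀ j : ℕ, gs j ∈ Set.Icc (0 : ℝ) 1)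
    (hineq : ∀ j : ℕ, (entryN C j (j + 1)).re ^ 2 /
        ((ν - (entryN C j j).re) * (ν - (entryN C (j + 1) (j + 1)).re))
          ≤ gs (j + 1) * (1 - gs j)) :
    r0N C ≤ ν := by
  classical
  set a : ℕ → ℝ := fun j => (entryN C j j).re with ha
  set b : ℕ → ℝ := fun j => (entryN C j (j + 1)).re with hbdef
  have hent : ∀ i j, entryN C i j = ((entryN C i j).re : ℂ) := fun i j =>
    Complex.ext (by simp) (by simp [hreal i j])
  have hCnorm : ∀ i j : ℕ, ‖entryN C i j‖ ≤ ‖C‖ := by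
    intro i j
    calc ‖entryN C i j‖ ≤ ‖eN i‖ * ‖C (eN j)‖ := norm_inner_le_norm (𝕜 := ℂ) _ _
    _ ≤ 1 * (‖C‖ * ‖eN j‖) := by
        rw [norm_eN]
        exact mul_le_mul_of_nonneg_left (C.le_opNorm _) zero_le_one
    _ = ‖C‖ := by rw [norm_eN]; ring
  have habs : ∀ i j, |(entryN C i j).re| ≤ ‖C‖ := fun i j =>
    (Complex.abs_re_le_norm _).trans (hCnorm i j)
  have hbddA : BddAbove (Set.range fun j : ℕ => (entryN C j j).re) :=
    ⟨‖C‖, by rintro _ ⟨j, rfl⟩; exact (le_abs_self _).trans (habs j j)⟩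
  have haν : ∀ j, a j < ν := fun j => lt_of_le_of_lt (le_ciSup hbddA j) hν
  have haν' : ∀ j, 0 < ν - a j := fun j => sub_pos.2 (haν j)
  have hν0 : 0 < ν := (hdiag 0).trans (haν 0)
  have hb0 : ∀ j, 0 ≤ b j := fun j => (hoff j).le
  have ha0 : ∀ j, 0 < a j := hdiag
  -- main bound on the numerical range
  have key : ∀ x : HN, ‖x‖ = 1 → ((inner ℂ x (C x) : ℂ)).re ≤ ν := by
    intro x hx
    set u : ℕ → ℝ := fun i => ‖x i‖ with hu
    have hu0 : ∀ i, 0 ≤ u i := fun i => norm_nonneg _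
    have su2 : Summable (fun i => u i ^ 2) := by
      have h1 := lp.memℓp x
      rw [memℓp_gen_iff (by norm_num : (0:ℝ) < (2 : ℝ≥0∞).toReal)] at h1
      have h2 : ∀ i, ‖x i‖ ^ (2 : ℝ≥0∞).toReal = u i ^ 2 := by
        intro i
        rw [show ((2 : ℝ≥0∞).toReal) = ((2 : ℕ) : ℝ) by norm_num,
          Real.rpow_natCast]
      simpa [h2] using h1
    have hsum_u2 : ∑' i, u i ^ 2 = 1 := by
      have h1 := lp.norm_rpow_eq_tsum (p := 2)
        (by norm_num : (0:ℝ) < (2 : ℝ≥0∞).toReal) x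
      have h2 : ∀ i, ‖x i‖ ^ (2 : ℝ≥0∞).toReal = u i ^ 2 := by
        intro i
        rw [show ((2 : ℝ≥0∞).toReal) = ((2 : ℕ) : ℝ) by norm_num,
          Real.rpow_natCast]
      rw [hx] at h1
      simp only [h2] at h1
      rw [← h1, Real.one_rpow]
    -- pointwise description of C x
    have hCx0 : (C x) 0 = ((a 0 : ℝ) : ℂ) * x 0 + ((b 0 : ℝ) : ℂ) * x 1 := by
      have hz : ∀ j ∉ ({0, 1} : Finset ℕ), x j * entryN C 0 j = 0 := by
        intro j hj
        simp only [Finset.mem_insert, Finset.mem_singleton] at hj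
        push_neg at hj
        rw [htri 0 j (by omega), mul_zero]
      have h1 := hasSum_sum_of_ne_finset_zero (L := SummationFilter.unconditional ℕ) hz
      rw [(hasSum_Cx x C 0).unique h1]
      rw [Finset.sum_pair (by norm_num : (0:ℕ) ≠ 1)]
      rw [hent 0 0, hent 0 1]
      ring
    have hCxS : ∀ k : ℕ, (C x) (k + 1) =
        ((b k : ℝ) : ℂ) * x k + ((a (k+1) : ℝ) : ℂ) * x (k+1) + ((b (k+1) : ℝ) : ℂ) * x (k+2) := by
      intro k
      have hz : ∀ j ∉ ({k, k+1, k+2} : Finset ℕ), x j * entryN C (k+1) j = 0 := by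
        intro j hj
        simp only [Finset.mem_insert, Finset.mem_singleton] at hj
        push_neg at hj
        rw [htri (k+1) j (by omega), mul_zero]
      have h1 := hasSum_sum_of_ne_finset_zero (L := SummationFilter.unconditional ℕ) hz
      rw [(hasSum_Cx x C (k+1)).unique h1]
      rw [Finset.sum_insert (by simp only [Finset.mem_insert, Finset.mem_singleton]; omega),
        Finset.sum_pair (by omega : k + 1 ≠ k + 2)]
      have e1 : entryN C (k+1) k = ((b k : ℝ) : ℂ) := by rw [hsym k, hbdef, hent k (k+1)]
      have e2 : entryN C (k+1) (k+1) = ((a (k+1) : ℝ) : ℂ) := hent (k+1) (k+1)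
      have e3 : entryN C (k+1) (k+2) = ((b (k+1) : ℝ) : ℂ) := hent (k+1) (k+2)
      rw [e1, e2, e3]
      ring
    -- the real parts of the inner-product terms
    have hinner : HasSum (fun i => (starRingEnd ℂ) (x i) * (C x) i) (inner ℂ x (C x) : ℂ) := by
      simpa [RCLike.inner_apply, mul_comm] using lp.hasSum_inner (𝕜 := ℂ) x (C x)
    have hre : HasSum (fun i => ((starRingEnd ℂ) (x i) * (C x) i).re)
        ((inner ℂ x (C x) : ℂ)).re := Complex.hasSum_re hinner
    set T : ℕ → ℝ := fun i => a i * u i ^ 2 +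
        (if i = 0 then 0 else b (i - 1) * (u (i - 1) * u i)) + b i * (u i * u (i+1)) with hT
    have hre_le : ∀ i, ((starRingEnd ℂ) (x i) * (C x) i).re ≤ T i := by
      intro i
      rcases i with _ | k
      · have h1 : (starRingEnd ℂ) (x 0) * (C x) 0 =
            ((a 0 : ℝ) : ℂ) * ((starRingEnd ℂ) (x 0) * x 0)
              + ((b 0 : ℝ) : ℂ) * ((starRingEnd ℂ) (x 0) * x 1) := by
          rw [hCx0]; ring
        rw [h1]
        simp only [Complex.add_re, Complex.re_ofReal_mul, re_diag]
        have h2 : ((starRingEnd ℂ) (x 0) * x 1).re ≤ u 0 * u 1 := re_cross _ _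
        have h3 : b 0 * ((starRingEnd ℂ) (x 0) * x 1).re ≤ b 0 * (u 0 * u 1) :=
          mul_le_mul_of_nonneg_left h2 (hb0 0)
        simp only [hT, if_pos rfl, if_true]
        simp only [hu]
        linarith
      · have h1 : (starRingEnd ℂ) (x (k+1)) * (C x) (k+1) =
            ((b k : ℝ) : ℂ) * ((starRingEnd ℂ) (x (k+1)) * x k)
              + ((a (k+1) : ℝ) : ℂ) * ((starRingEnd ℂ) (x (k+1)) * x (k+1))
              + ((b (k+1) : ℝ) : ℂ) * ((starRingEnd ℂ) (x (k+1)) * x (k+2)) := by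
          rw [hCxS k]; ring
        rw [h1]
        simp only [Complex.add_re, Complex.re_ofReal_mul, re_diag]
        have h2 : ((starRingEnd ℂ) (x (k+1)) * x k).re ≤ u (k+1) * u k := re_cross _ _
        have h3 : ((starRingEnd ℂ) (x (k+1)) * x (k+2)).re ≤ u (k+1) * u (k+2) := re_cross _ _
        have h4 : b k * ((starRingEnd ℂ) (x (k+1)) * x k).re ≤ b k * (u k * u (k+1)) := by
          have := mul_le_mul_of_nonneg_left h2 (hb0 k)
          linarith [this, mul_comm (u (k+1)) (u k)]
        have h5 : b (k+1) * ((starRingEnd ℂ) (x (k+1)) * x (k+2)).re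
            ≤ b (k+1) * (u (k+1) * u (k+2)) := mul_le_mul_of_nonneg_left h3 (hb0 (k+1))
        simp only [hT, if_neg (Nat.succ_ne_zero k), Nat.add_sub_cancel]
        simp only [hu]
        linarith
    -- summability
    have su2' : Summable (fun i => u (i+1) ^ 2) := (summable_nat_add_iff 1).2 su2
    have scross : Summable (fun i => u i * u (i+1)) := by
      apply Summable.of_nonneg_of_le (fun i => mul_nonneg (hu0 i) (hu0 (i+1)))
        (fun i => ?_) ((su2.add su2').div_const 2)
      nlinarith [sq_nonneg (u i - u (i+1))]
    have scr : Summable (fun j => b j * (u j * u (j+1))) := by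
      apply Summable.of_nonneg_of_le
        (fun j => mul_nonneg (hb0 j) (mul_nonneg (hu0 j) (hu0 (j+1))))
        (fun j => ?_) (scross.mul_left ‖C‖)
      exact mul_le_mul_of_nonneg_right ((le_abs_self _).trans (habs j (j+1)))
        (mul_nonneg (hu0 j) (hu0 (j+1)))
    have sau2 : Summable (fun j => a j * u j ^ 2) := by
      apply Summable.of_nonneg_of_le
        (fun j => mul_nonneg (ha0 j).le (sq_nonneg _)) (fun j => ?_) (su2.mul_left ‖C‖)
      exact mul_le_mul_of_nonneg_right ((le_abs_self _).trans (habs j j)) (sq_nonneg _)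
    set sh : ℕ → ℝ := fun i => if i = 0 then 0 else b (i - 1) * (u (i - 1) * u i) with hsh
    have hshsucc : ∀ n : ℕ, sh (n + 1) = b n * (u n * u (n+1)) := by
      intro n; simp [hsh]
    have ssh : Summable sh := by
      rw [← summable_nat_add_iff 1]
      simpa [hshsucc] using scr
    have tsh : ∑' i, sh i = ∑' j, b j * (u j * u (j+1)) := by
      rw [ssh.tsum_eq_zero_add]
      simp [hshsucc, hsh]
    have sT : Summable T := (sau2.add ssh).add scr
    -- Schur inequality termwise
    set D1 : ℕ → ℝ := fun j => (1 - gs j) * (ν - a j) * u j ^ 2 with hD1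
    set E : ℕ → ℝ := fun j => gs j * (ν - a j) * u j ^ 2 with hE
    have hschur : ∀ j, 2 * (b j * (u j * u (j+1))) ≤ D1 j + E (j+1) := by
      intro j
      exact schur_step (b j) (ν - a j) (ν - a (j+1)) (u j) (u (j+1)) (gs j) (gs (j+1))
        (hb0 j) (hu0 j) (hu0 (j+1)) (haν' j) (haν' (j+1)) (hg j).2 (hg (j+1)).1 (hineq j)
    have hD1nn : ∀ j, 0 ≤ D1 j := fun j =>
      mul_nonneg (mul_nonneg (by linarith [(hg j).2]) (haν' j).le) (sq_nonneg _)
    have hEnn : ∀ j, 0 ≤ E j := fun j =>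
      mul_nonneg (mul_nonneg (hg j).1 (haν' j).le) (sq_nonneg _)
    have sD1 : Summable D1 := by
      apply Summable.of_nonneg_of_le hD1nn (fun j => ?_) (su2.mul_left ν)
      have : (1 - gs j) * (ν - a j) ≤ ν := by
        nlinarith [(hg j).1, (hg j).2, haν' j, ha0 j, hν0]
      exact mul_le_mul_of_nonneg_right this (sq_nonneg _)
    have sE : Summable E := by
      apply Summable.of_nonneg_of_le hEnn (fun j => ?_) (su2.mul_left ν)
      have : gs j * (ν - a j) ≤ ν := by
        nlinarith [(hg j).1, (hg j).2, haν' j, ha0 j, hν0]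
      exact mul_le_mul_of_nonneg_right this (sq_nonneg _)
    have sE' : Summable (fun j => E (j+1)) := (summable_nat_add_iff 1).2 sE
    -- chain the sums
    have step1 : ((inner ℂ x (C x) : ℂ)).re ≤ ∑' i, T i := by
      rw [← hre.tsum_eq]
      exact Summable.tsum_le_tsum hre_le hre.summable sT
    have step2 : ∑' i, T i = (∑' j, a j * u j ^ 2) + 2 * ∑' j, b j * (u j * u (j+1)) := by
      rw [hT, Summable.tsum_add (sau2.add ssh) scr, Summable.tsum_add sau2 ssh, tsh]
      ring
    have step3 : 2 * (∑' j, b j * (u j * u (j+1))) ≤ (∑' j, D1 j) + ∑' j, E (j+1) := by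
      rw [← tsum_mul_left, ← Summable.tsum_add sD1 sE']
      exact Summable.tsum_le_tsum hschur (scr.mul_left 2) (sD1.add sE')
    have step4 : ∑' j, E (j+1) ≤ ∑' j, E j := by
      rw [sE.tsum_eq_zero_add]
      linarith [hEnn 0]
    have step5 : (∑' j, D1 j) + ∑' j, E j = ∑' j, (ν - a j) * u j ^ 2 := by
      rw [← Summable.tsum_add sD1 sE]
      congr 1
      funext j
      simp only [hD1, hE]
      ring
    have sνa : Summable (fun j => (ν - a j) * u j ^ 2) := by
      apply Summable.of_nonneg_of_le
        (fun j => mul_nonneg (haν' j).le (sq_nonneg _)) (fun j => ?_) (su2.mul_left ν)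
      exact mul_le_mul_of_nonneg_right (by linarith [ha0 j]) (sq_nonneg _)
    have step6 : (∑' j, a j * u j ^ 2) + ∑' j, (ν - a j) * u j ^ 2 = ν := by
      rw [← Summable.tsum_add sau2 sνa]
      have : ∀ j, a j * u j ^ 2 + (ν - a j) * u j ^ 2 = ν * u j ^ 2 := fun j => by ring
      simp only [this]
      rw [tsum_mul_left, hsum_u2, mul_one]
    linarith
  -- conclude
  have hsub : numRangeN C ⊆ {z : ℂ | z.re ≤ ν} := by
    apply closure_minimal
    · rintro z ⟨x, hx, rfl⟩
      exact key x hx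
    · exact isClosed_le Complex.continuous_re continuous_const
  apply Real.sSup_le
  · rintro y ⟨z, hz, rfl⟩
    exact hsub hz
  · exact hν0.le
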